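/- Let K be a Kraus family with derivative family K̇, let h⋄ be an r×r Hermitian matrix, and let ρ⋄ be a d×d positive semidefinite matrix with Tr ρ⋄ = 1. Then the pair (h⋄, ρ⋄) is a saddle point of g(h, ρ) = Tr(ρ α(h)) — that is, Tr(ρ α(h⋄)) ≤ Tr(ρ⋄ α(h⋄)) ≤ Tr(ρ⋄ α(h)) for all density matrices ρ and all Hermitian h — if and only if both: (i) Tr(ρ⋄ α(h⋄)) = ‖α(h⋄)‖, and (ii) for every r×r Hermitian matrix Δh, Re Tr( ρ⋄ · ∑_{i,j} i Δh_{ij} K_i† (K̇_j − i ∑_k h⋄_{jk} K_k) ) = 0. -/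

import Mathlib

open Matrix
open scoped ComplexOrder

/-- The ℓ²→ℓ² operator norm (largest singular value) of a complex matrix. -/
noncomputable def opNorm {m n : Type*} [Fintype m] [Fintype n] [DecidableEq n]
    (A : Matrix m n ℂ) : ℝ :=
  ‖LinearMap.toContinuousLinearMap (Matrix.toEuclideanLin A)‖


lemma aux_diag_re_nonneg {n : Type*} [Fintype n] [DecidableEq n] {A : Matrix n n ℂ}
    (hA : A.PosSemidef) (i : n) : 0 ≤ (A i i).re := by
  have h := hA.re_dotProduct_nonneg (Pi.single i 1)
  simpa [dotProduct, mulVec, Pi.single_apply, Finset.sum_ite_eq] using h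

lemma aux_trace_re_nonneg {n : Type*} [Fintype n] [DecidableEq n] {A : Matrix n n ℂ}
    (hA : A.PosSemidef) : 0 ≤ A.trace.re := by
  rw [Matrix.trace, Complex.re_sum]
  exact Finset.sum_nonneg fun i _ => aux_diag_re_nonneg hA i

lemma aux_trace_mul_re_nonneg {n : Type*} [Fintype n] [DecidableEq n] {ρ B : Matrix n n ℂ}
    (hρ : ρ.PosSemidef) (hB : B.PosSemidef) : 0 ≤ (ρ * B).trace.re := by
  open scoped MatrixOrder Matrix.Norms.L2Operator in
  obtain ⟨C, hC⟩ := CStarAlgebra.nonneg_iff_eq_star_mul_self.mp hB.nonneg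
  rw [Matrix.star_eq_conjTranspose] at hC
  subst hC
  have : (ρ * (Cᴴ * C)).trace = (C * ρ * Cᴴ).trace := by
    rw [Matrix.trace_mul_comm ρ (Cᴴ * C), Matrix.mul_assoc, Matrix.trace_mul_comm Cᴴ (C * ρ),
      Matrix.mul_assoc]
  rw [this]
  exact aux_trace_re_nonneg (hρ.mul_mul_conjTranspose_same C)

/-- `α(h) = ∑_i (K̇_i − i ∑_j h_{ij} K_j)† (K̇_i − i ∑_j h_{ij} K_j)`. -/
noncomputable def krausAlpha {d d' r : ℕ} (K Kd : Fin r → Matrix (Fin d') (Fin d) ℂ)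
    (h : Matrix (Fin r) (Fin r) ℂ) : Matrix (Fin d) (Fin d) ℂ :=
  ∑ i, (Kd i - Complex.I • ∑ j, h i j • K j)ᴴ * (Kd i - Complex.I • ∑ j, h i j • K j)


-- eigenvector action through toEuclideanLin
lemma aux_toEuclideanLin_eigen {d : ℕ} {A : Matrix (Fin d) (Fin d) ℂ}
    (hH : A.IsHermitian) (i : Fin d) :
    Matrix.toEuclideanLin A (hH.eigenvectorBasis i) =
      (hH.eigenvalues i : ℂ) • hH.eigenvectorBasis i := by
  have h := hH.mulVec_eigenvectorBasis i
  rw [Matrix.toEuclideanLin_apply]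
  ext j
  have := congrFun h j
  simp only [Pi.smul_apply, smul_eq_mul] at this ⊢
  simpa [Complex.real_smul] using this

lemma aux_opNorm_eq {d : ℕ} [NeZero d] {A : Matrix (Fin d) (Fin d) ℂ}
    (hA : A.PosSemidef) {i₀ : Fin d} (hmax : ∀ j, hA.1.eigenvalues j ≤ hA.1.eigenvalues i₀) :
    opNorm A = hA.1.eigenvalues i₀ := by
  set hH := hA.1
  set b := hH.eigenvectorBasis with hb
  set μ := hH.eigenvalues with hμ
  set t := μ i₀ with htdef
  have ht0 : 0 ≤ t := hA.eigenvalues_nonneg i₀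
  set T := LinearMap.toContinuousLinearMap (Matrix.toEuclideanLin A) with hT
  have hTapp : ∀ x, T x = Matrix.toEuclideanLin A x := fun x => rfl
  apply le_antisymm
  · apply ContinuousLinearMap.opNorm_le_bound _ ht0
    intro x
    set c := b.repr x with hc
    have hx : x = ∑ i, c i • b i := (b.sum_repr x).symm
    have hTx : T x = ∑ i, ((μ i : ℂ) * c i) • b i := by
      rw [hTapp, hx, map_sum]
      refine Finset.sum_congr rfl fun i _ => ?_
      rw [_root_.map_smul, aux_toEuclideanLin_eigen hH i, smul_smul, mul_comm]
    have hrepr : b.repr (T x) = fun j => (μ j : ℂ) * c j := by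
      rw [hTx, map_sum]
      ext j
      simp only [_root_.map_smul, b.repr_self]
      have : (∑ i : Fin d, ((μ i : ℂ) * c i) • EuclideanSpace.single i (1:ℂ)) j
          = ∑ i : Fin d, (((μ i : ℂ) * c i) • EuclideanSpace.single i (1:ℂ)) j :=
        by simp only [WithLp.ofLp_sum, Finset.sum_apply]
      rw [this]
      simp [EuclideanSpace.single_apply]
    have h1 : ‖T x‖ = Real.sqrt (∑ j, ‖(μ j : ℂ) * c j‖ ^ 2) := by
      rw [← b.repr.norm_map (T x), EuclideanSpace.norm_eq, hrepr]
    have h2 : ‖x‖ = Real.sqrt (∑ j, ‖c j‖ ^ 2) := by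
      rw [← b.repr.norm_map x, EuclideanSpace.norm_eq]
    rw [h1, h2]
    rw [show t * Real.sqrt (∑ j, ‖c j‖ ^ 2) = Real.sqrt (∑ j, t ^ 2 * ‖c j‖ ^ 2) by
      rw [← Finset.mul_sum, Real.sqrt_mul (by positivity), Real.sqrt_sq ht0]]
    apply Real.sqrt_le_sqrt
    apply Finset.sum_le_sum
    intro j _
    have : ‖(μ j : ℂ)‖ ≤ t := by
      rw [Complex.norm_real, Real.norm_eq_abs, abs_of_nonneg (hA.eigenvalues_nonneg j)]
      exact hmax j
    calc ‖(μ j : ℂ) * c j‖ ^ 2 = ‖(μ j : ℂ)‖ ^ 2 * ‖c j‖ ^ 2 := by rw [norm_mul]; ring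
    _ ≤ t ^ 2 * ‖c j‖ ^ 2 := by
        apply mul_le_mul_of_nonneg_right _ (by positivity)
        exact pow_le_pow_left₀ (norm_nonneg _) this 2
  · have hx1 : ‖b i₀‖ = 1 := b.orthonormal.1 i₀
    have hTx : T (b i₀) = (t : ℂ) • b i₀ := by
      rw [hTapp, aux_toEuclideanLin_eigen hH i₀]
    have : ‖T (b i₀)‖ = t := by
      rw [hTx, norm_smul, hx1, mul_one, Complex.norm_real, Real.norm_eq_abs,
        abs_of_nonneg ht0]
    calc t = ‖T (b i₀)‖ := this.symm
    _ ≤ ‖T‖ * ‖b i₀‖ := T.le_opNorm _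
    _ = opNorm A := by rw [hx1, mul_one]; rfl

lemma aux_diag_real {n : Type*} [Fintype n] {A : Matrix n n ℂ} (hA : A.IsHermitian) (i : n) :
    ((A i i : ℂ) : ℂ).im = 0 := by
  have := congrFun (congrFun hA.eq i) i
  rw [Matrix.conjTranspose_apply] at this
  have h2 := congrArg Complex.im this
  simp at h2
  linarith

lemma aux_trace_mul_le {d : ℕ} [NeZero d] {A ρ : Matrix (Fin d) (Fin d) ℂ}
    (hA : A.PosSemidef) (hρ : ρ.PosSemidef) (hρtr : ρ.trace = 1)
    {i₀ : Fin d} (hmax : ∀ j, hA.1.eigenvalues j ≤ hA.1.eigenvalues i₀) :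
    ((ρ * A).trace).re ≤ hA.1.eigenvalues i₀ := by
  set hH := hA.1
  set μ := hH.eigenvalues with hμ
  set t := μ i₀ with htdef
  set V : Matrix (Fin d) (Fin d) ℂ := (hH.eigenvectorUnitary : Matrix (Fin d) (Fin d) ℂ) with hV
  set σ := Vᴴ * ρ * V with hσ
  have hσpsd : σ.PosSemidef := hρ.conjTranspose_mul_mul_same V
  have hVV : V * Vᴴ = 1 := by
    have := (Matrix.mem_unitaryGroup_iff).mp hH.eigenvectorUnitary.2
    rwa [Matrix.star_eq_conjTranspose] at this
  have hA' : A = V * Matrix.diagonal (RCLike.ofReal ∘ μ) * Vᴴ := by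
    conv_lhs => rw [hH.spectral_theorem]
    rw [Unitary.conjStarAlgAut_apply, Matrix.star_eq_conjTranspose]
  have htrace : (ρ * A).trace = ∑ i, σ i i * (μ i : ℂ) := by
    rw [hA', ← Matrix.mul_assoc, Matrix.trace_mul_comm, ← Matrix.mul_assoc,
      ← Matrix.mul_assoc, ← hσ]
    simp [Matrix.trace, Matrix.diag, Matrix.mul_diagonal]
  have hσtr : σ.trace = 1 := by
    rw [hσ, Matrix.trace_mul_comm, ← Matrix.mul_assoc, hVV, Matrix.one_mul, hρtr]
  have hdiag_im : ∀ i, (σ i i).im = 0 := fun i => aux_diag_real hσpsd.1 i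
  have hdiag_re : ∀ i, 0 ≤ (σ i i).re := fun i => aux_diag_re_nonneg hσpsd i
  rw [htrace, Complex.re_sum]
  have : ∀ i ∈ Finset.univ, (σ i i * (μ i : ℂ)).re ≤ (σ i i).re * t := by
    intro i _
    rw [Complex.mul_re, Complex.ofReal_re, Complex.ofReal_im, hdiag_im i]
    simp only [zero_mul, mul_zero, sub_zero]
    exact mul_le_mul_of_nonneg_left (hmax i) (hdiag_re i)
  refine le_trans (Finset.sum_le_sum this) ?_
  rw [← Finset.sum_mul]
  have : ∑ i, (σ i i).re = 1 := by
    have := congrArg Complex.re hσtr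
    rwa [Matrix.trace, Complex.re_sum] at this
  rw [this, one_mul]

set_option maxHeartbeats 1000000 in
lemma aux_exists_attain {d : ℕ} [NeZero d] {A : Matrix (Fin d) (Fin d) ℂ}
    (hA : A.PosSemidef) {i₀ : Fin d} :
    ∃ ρ : Matrix (Fin d) (Fin d) ℂ, ρ.PosSemidef ∧ ρ.trace = 1 ∧
      ((ρ * A).trace).re = hA.1.eigenvalues i₀ := by
  set hH := hA.1
  set v : Fin d → ℂ := ⇑(hH.eigenvectorBasis i₀) with hv
  have hnorm : ∑ j, Complex.normSq (v j) = 1 := by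
    have h1 : ‖hH.eigenvectorBasis i₀‖ = 1 := hH.eigenvectorBasis.orthonormal.1 i₀
    rw [EuclideanSpace.norm_eq] at h1
    have h2 := congrArg (· ^ 2) h1
    simp only [one_pow] at h2
    rw [Real.sq_sqrt (Finset.sum_nonneg fun _ _ => sq_nonneg _)] at h2
    rw [← h2]
    refine Finset.sum_congr rfl fun j _ => ?_
    rw [Complex.normSq_eq_norm_sq]
  have hsum : ∑ j, Complex.normSq (v j) = (1 : ℝ) := hnorm
  refine ⟨Matrix.vecMulVec v (star v), ?_, ?_, ?_⟩
  · refine Matrix.posSemidef_iff_dotProduct_mulVec.mpr ⟨?_, ?_⟩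
    · ext i j
      simp [Matrix.conjTranspose_apply, Matrix.vecMulVec_apply, mul_comm]
    · intro x
      have hform : dotProduct (star x) (Matrix.vecMulVec v (star v) *ᵥ x)
          = star (dotProduct (star v) x) * dotProduct (star v) x := by
        simp only [dotProduct, Matrix.mulVec, Matrix.vecMulVec_apply, Pi.star_apply,
          star_sum, star_mul', star_star, Finset.mul_sum, Finset.sum_mul]
        rw [Finset.sum_comm]
        refine Finset.sum_congr rfl fun i _ => Finset.sum_congr rfl fun j _ => ?_
        ring
      rw [hform]
      exact star_mul_self_nonneg _
  · rw [Matrix.trace]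
    have : ∀ i, Matrix.vecMulVec v (star v) i i = (Complex.normSq (v i) : ℂ) := by
      intro i
      rw [Matrix.vecMulVec_apply]
      simp [Complex.mul_conj]
    simp only [Matrix.diag]
    calc ∑ i, Matrix.vecMulVec v (star v) i i = ∑ i, (Complex.normSq (v i) : ℂ) := by
          exact Finset.sum_congr rfl fun i _ => this i
    _ = ((∑ i, Complex.normSq (v i) : ℝ) : ℂ) := by push_cast; ring
    _ = 1 := by rw [hsum]; norm_num
  · have htr : (Matrix.vecMulVec v (star v) * A).trace
        = dotProduct (star v) (A *ᵥ v) := by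
      simp only [Matrix.trace, Matrix.diag, Matrix.mul_apply, Matrix.vecMulVec_apply,
        dotProduct, Matrix.mulVec, Pi.star_apply, Finset.mul_sum]
      rw [Finset.sum_comm]
      refine Finset.sum_congr rfl fun i _ => Finset.sum_congr rfl fun j _ => ?_
      ring
    rw [htr, hH.mulVec_eigenvectorBasis i₀]
    have : dotProduct (star v) (hH.eigenvalues i₀ • v)
        = (hH.eigenvalues i₀ : ℂ) * ((∑ j, Complex.normSq (v j) : ℝ) : ℂ) := by
      simp only [dotProduct, Pi.smul_apply, Pi.star_apply]
      push_cast
      rw [Finset.mul_sum]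
      refine Finset.sum_congr rfl fun j _ => ?_
      rw [Complex.real_smul]
      rw [show star (v j) * ((hH.eigenvalues i₀ : ℂ) * v j)
          = (hH.eigenvalues i₀ : ℂ) * (v j * (starRingEnd ℂ) (v j)) by
        simp only [Complex.star_def]; ring, Complex.mul_conj]
    rw [this, hsum]
    simp

lemma aux_sub_expand {n m : Type*} [Fintype n] [Fintype m] (A B : Matrix n m ℂ) (c : ℂ)
    (hc : star c = c) :
    (A - c • B)ᴴ * (A - c • B)
      = Aᴴ * A - c • (Aᴴ * B) - c • (Bᴴ * A) + (c ^ 2) • (Bᴴ * B) := by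
  rw [Matrix.conjTranspose_sub, Matrix.conjTranspose_smul, hc]
  simp only [Matrix.sub_mul, Matrix.mul_sub, Matrix.smul_mul, Matrix.mul_smul, smul_sub, smul_add, smul_smul, sq]
  module

lemma aux_sum_expand {d d' r : ℕ} (M P : Fin r → Matrix (Fin d') (Fin d) ℂ) (t : ℝ) :
    ∑ i, (M i - (t : ℂ) • P i)ᴴ * (M i - (t : ℂ) • P i)
      = ∑ i, (M i)ᴴ * M i
        + (t : ℂ) • ((-∑ i, (P i)ᴴ * M i) + (-∑ i, (P i)ᴴ * M i)ᴴ)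
        + ((t : ℂ) ^ 2) • ∑ i, (P i)ᴴ * P i := by
  have he : ∀ i ∈ Finset.univ, (M i - (t : ℂ) • P i)ᴴ * (M i - (t : ℂ) • P i)
      = (M i)ᴴ * M i - (t : ℂ) • ((M i)ᴴ * P i) - (t : ℂ) • ((P i)ᴴ * M i)
        + ((t : ℂ) ^ 2) • ((P i)ᴴ * (P i)) := fun i _ =>
    aux_sub_expand (M i) (P i) (t : ℂ) (by rw [Complex.star_def, Complex.conj_ofReal])
  rw [Finset.sum_congr rfl he, Finset.sum_add_distrib, Finset.sum_sub_distrib,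
    Finset.sum_sub_distrib, ← Finset.smul_sum, ← Finset.smul_sum, ← Finset.smul_sum]
  have hMP : ∑ i, (M i)ᴴ * P i = (∑ i, (P i)ᴴ * M i)ᴴ := by
    rw [Matrix.conjTranspose_sum]
    exact Finset.sum_congr rfl fun i _ => by
      rw [Matrix.conjTranspose_mul, Matrix.conjTranspose_conjTranspose]
  rw [hMP]
  simp only [Matrix.conjTranspose_neg, smul_add, smul_neg]
  abel

lemma aux_expand {d d' r : ℕ} (K Kd : Fin r → Matrix (Fin d') (Fin d) ℂ)
    (hdia Δ : Matrix (Fin r) (Fin r) ℂ) (hΔ : Δ.IsHermitian) (t : ℝ) :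
    krausAlpha K Kd (hdia + (t : ℂ) • Δ) =
      krausAlpha K Kd hdia
      + (t : ℂ) • ((∑ i, ∑ j, (Complex.I * Δ i j) •
            ((K i)ᴴ * (Kd j - Complex.I • ∑ k, hdia j k • K k)))
          + (∑ i, ∑ j, (Complex.I * Δ i j) •
            ((K i)ᴴ * (Kd j - Complex.I • ∑ k, hdia j k • K k)))ᴴ)
      + ((t : ℂ) ^ 2) • ∑ i, (Complex.I • ∑ j, Δ i j • K j)ᴴ *
          (Complex.I • ∑ j, Δ i j • K j) := by
  have step1 : ∀ i : Fin r, Kd i - Complex.I • ∑ j, (hdia + (t : ℂ) • Δ) i j • K j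
      = (Kd i - Complex.I • ∑ j, hdia i j • K j)
        - (t : ℂ) • (Complex.I • ∑ j, Δ i j • K j) := by
    intro i
    have : ∑ j, (hdia + (t : ℂ) • Δ) i j • K j
        = (∑ j, hdia i j • K j) + (t : ℂ) • ∑ j, Δ i j • K j := by
      rw [Finset.smul_sum, ← Finset.sum_add_distrib]
      refine Finset.sum_congr rfl fun j _ => ?_
      simp [Matrix.add_apply, Matrix.smul_apply, add_smul, smul_smul]
    rw [this, smul_add, smul_comm Complex.I ((t:ℂ)), sub_add_eq_sub_sub]
  have hPc : ∀ i : Fin r, (Complex.I • ∑ j, Δ i j • K j)ᴴ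
      = ∑ j, (-(Complex.I) * Δ j i) • (K j)ᴴ := by
    intro i
    rw [Matrix.conjTranspose_smul, Complex.star_def, Complex.conj_I,
      Matrix.conjTranspose_sum, Finset.smul_sum]
    refine Finset.sum_congr rfl fun j _ => ?_
    rw [Matrix.conjTranspose_smul, smul_smul, hΔ.apply j i]
  have hS1 : -∑ i, (Complex.I • ∑ j, Δ i j • K j)ᴴ * (Kd i - Complex.I • ∑ j, hdia i j • K j)
      = ∑ i, ∑ j, (Complex.I * Δ i j) •
          ((K i)ᴴ * (Kd j - Complex.I • ∑ k, hdia j k • K k)) := by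
    rw [neg_eq_iff_eq_neg]
    calc ∑ i, (Complex.I • ∑ j, Δ i j • K j)ᴴ * (Kd i - Complex.I • ∑ j, hdia i j • K j)
        = ∑ i, ∑ j, (-Complex.I * Δ j i) •
            ((K j)ᴴ * (Kd i - Complex.I • ∑ k, hdia i k • K k)) := by
          refine Finset.sum_congr rfl fun i _ => ?_
          rw [hPc i, Matrix.sum_mul]
          exact Finset.sum_congr rfl fun j _ => Matrix.smul_mul _ _ _
      _ = ∑ j, ∑ i, (-Complex.I * Δ j i) •
            ((K j)ᴴ * (Kd i - Complex.I • ∑ k, hdia i k • K k)) := Finset.sum_comm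
      _ = -∑ a, ∑ b, (Complex.I * Δ a b) •
            ((K a)ᴴ * (Kd b - Complex.I • ∑ k, hdia b k • K k)) := by
          rw [← Finset.sum_neg_distrib]
          refine Finset.sum_congr rfl fun a _ => ?_
          rw [← Finset.sum_neg_distrib]
          exact Finset.sum_congr rfl fun b _ => by rw [neg_mul, neg_smul]
  calc krausAlpha K Kd (hdia + (t : ℂ) • Δ)
      = ∑ i, ((Kd i - Complex.I • ∑ j, hdia i j • K j)
            - (t : ℂ) • (Complex.I • ∑ j, Δ i j • K j))ᴴ
          * ((Kd i - Complex.I • ∑ j, hdia i j • K j)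
            - (t : ℂ) • (Complex.I • ∑ j, Δ i j • K j)) := by
        unfold krausAlpha
        exact Finset.sum_congr rfl fun i _ => by rw [step1 i]
    _ = _ := by
        rw [aux_sum_expand (fun i => Kd i - Complex.I • ∑ j, hdia i j • K j)
          (fun i => Complex.I • ∑ j, Δ i j • K j) t]
        rw [hS1]
        rfl

lemma aux_trace_conjT {n : Type*} [Fintype n] {ρ S : Matrix n n ℂ} (hρ : ρ.IsHermitian) :
    (ρ * Sᴴ).trace = star ((ρ * S).trace) := by
  have h1 : ρ * Sᴴ = (S * ρ)ᴴ := by rw [Matrix.conjTranspose_mul, hρ.eq]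
  rw [h1, Matrix.trace_conjTranspose, Matrix.trace_mul_comm]

lemma aux_trace_expand {d d' r : ℕ} (K Kd : Fin r → Matrix (Fin d') (Fin d) ℂ)
    (hdia Δ : Matrix (Fin r) (Fin r) ℂ) (hΔ : Δ.IsHermitian)
    (ρ : Matrix (Fin d) (Fin d) ℂ) (hρH : ρ.IsHermitian) (t : ℝ) :
    ((ρ * krausAlpha K Kd (hdia + (t : ℂ) • Δ)).trace).re
      = ((ρ * krausAlpha K Kd hdia).trace).re
        + 2 * t * ((ρ * ∑ i, ∑ j, (Complex.I * Δ i j) •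
            ((K i)ᴴ * (Kd j - Complex.I • ∑ k, hdia j k • K k))).trace).re
        + t ^ 2 * ((ρ * ∑ i, (Complex.I • ∑ j, Δ i j • K j)ᴴ *
            (Complex.I • ∑ j, Δ i j • K j)).trace).re := by
  rw [aux_expand K Kd hdia Δ hΔ t]
  set S : Matrix (Fin d) (Fin d) ℂ := ∑ i, ∑ j, (Complex.I * Δ i j) •
      ((K i)ᴴ * (Kd j - Complex.I • ∑ k, hdia j k • K k)) with hS
  set T : Matrix (Fin d) (Fin d) ℂ := ∑ i, (Complex.I • ∑ j, Δ i j • K j)ᴴ *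
      (Complex.I • ∑ j, Δ i j • K j) with hT
  rw [Matrix.mul_add, Matrix.mul_add, Matrix.mul_smul, Matrix.mul_smul, Matrix.mul_add,
    Matrix.trace_add, Matrix.trace_add, Matrix.trace_smul, Matrix.trace_smul,
    Matrix.trace_add, aux_trace_conjT hρH]
  simp only [smul_eq_mul, Complex.add_re]
  rw [show ((t : ℂ) ^ 2) = ((t ^ 2 : ℝ) : ℂ) by push_cast; ring]
  simp only [Complex.mul_re, Complex.ofReal_re, Complex.ofReal_im, Complex.add_re,
    Complex.add_im, Complex.conj_re, Complex.conj_im, Complex.star_def]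
  ring

/-- Characterization of saddle points of `g(h,ρ) = Tr(ρ α(h))`:
`(h⋄, ρ⋄)` is a saddle point iff `Tr(ρ⋄ α(h⋄)) = ‖α(h⋄)‖` and the gradient condition
`Re Tr(ρ⋄ ∑_{i,j} i Δh_{ij} K_i†(K̇_j − i ∑_k h⋄_{jk} K_k)) = 0` holds for all
Hermitian `Δh`. -/
theorem saddle_point_characterization {d d' r : ℕ}
    (K Kd : Fin r → Matrix (Fin d') (Fin d) ℂ)
    (hK : ∑ i, (K i)ᴴ * K i = 1)
    (hKd : ∑ i, ((Kd i)ᴴ * K i + (K i)ᴴ * Kd i) = 0)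
    (hdia : Matrix (Fin r) (Fin r) ℂ) (hdiaHerm : hdia.IsHermitian)
    (ρdia : Matrix (Fin d) (Fin d) ℂ) (hρ : ρdia.PosSemidef) (hρtr : ρdia.trace = 1) :
    ((∀ ρ : Matrix (Fin d) (Fin d) ℂ, ρ.PosSemidef → ρ.trace = 1 →
        ((ρ * krausAlpha K Kd hdia).trace).re ≤ ((ρdia * krausAlpha K Kd hdia).trace).re) ∧
      (∀ h : Matrix (Fin r) (Fin r) ℂ, h.IsHermitian →
        ((ρdia * krausAlpha K Kd hdia).trace).re ≤ ((ρdia * krausAlpha K Kd h).trace).re))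
    ↔
    (((ρdia * krausAlpha K Kd hdia).trace).re = opNorm (krausAlpha K Kd hdia) ∧
      ∀ Δh : Matrix (Fin r) (Fin r) ℂ, Δh.IsHermitian →
        ((ρdia * ∑ i, ∑ j, (Complex.I * Δh i j) •
            ((K i)ᴴ * (Kd j - Complex.I • ∑ k, hdia j k • K k))).trace).re = 0) := by
  rcases Nat.eq_zero_or_pos d with rfl | hd
  · exfalso
    simp [Matrix.trace] at hρtr
  haveI : NeZero d := ⟨hd.ne'⟩
  set A := krausAlpha K Kd hdia with hA
  have hApsd : A.PosSemidef := by
    rw [hA]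
    unfold krausAlpha
    exact Finset.sum_induction _ _ (fun a b ha hb => ha.add hb) Matrix.PosSemidef.zero
      (fun i _ => Matrix.posSemidef_conjTranspose_mul_self _)
  obtain ⟨i₀, _, hmax'⟩ := Finset.exists_max_image Finset.univ hApsd.1.eigenvalues
    Finset.univ_nonempty
  have hmax : ∀ j, hApsd.1.eigenvalues j ≤ hApsd.1.eigenvalues i₀ :=
    fun j => hmax' j (Finset.mem_univ j)
  have hop : opNorm A = hApsd.1.eigenvalues i₀ := aux_opNorm_eq hApsd hmax
  have part1 : (∀ ρ : Matrix (Fin d) (Fin d) ℂ, ρ.PosSemidef → ρ.trace = 1 →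
      ((ρ * A).trace).re ≤ ((ρdia * A).trace).re) ↔
      ((ρdia * A).trace).re = opNorm A := by
    constructor
    · intro hall
      obtain ⟨ρs, h1, h2, h3⟩ := aux_exists_attain hApsd (i₀ := i₀)
      refine le_antisymm ?_ ?_
      · rw [hop]
        exact aux_trace_mul_le hApsd hρ hρtr hmax
      · rw [hop, ← h3]
        exact hall ρs h1 h2
    · intro heq ρ hψ hψtr
      rw [heq, hop]
      exact aux_trace_mul_le hApsd hψ hψtr hmax
  have part2 : (∀ h : Matrix (Fin r) (Fin r) ℂ, h.IsHermitian →
      ((ρdia * A).trace).re ≤ ((ρdia * krausAlpha K Kd h).trace).re) ↔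
      (∀ Δh : Matrix (Fin r) (Fin r) ℂ, Δh.IsHermitian →
        ((ρdia * ∑ i, ∑ j, (Complex.I * Δh i j) •
            ((K i)ᴴ * (Kd j - Complex.I • ∑ k, hdia j k • K k))).trace).re = 0) := by
    constructor
    · intro hall Δh hΔh
      set L : ℝ := ((ρdia * ∑ i, ∑ j, (Complex.I * Δh i j) •
          ((K i)ᴴ * (Kd j - Complex.I • ∑ k, hdia j k • K k))).trace).re with hL
      set Q : ℝ := ((ρdia * ∑ i, (Complex.I • ∑ j, Δh i j • K j)ᴴ *
          (Complex.I • ∑ j, Δh i j • K j)).trace).re with hQ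
      have hQ0 : 0 ≤ Q := by
        rw [hQ]
        refine aux_trace_mul_re_nonneg hρ ?_
        exact Finset.sum_induction _ _ (fun a b ha hb => ha.add hb) Matrix.PosSemidef.zero
          (fun i _ => Matrix.posSemidef_conjTranspose_mul_self _)
      have ht : ∀ t : ℝ, 0 ≤ 2 * t * L + t ^ 2 * Q := by
        intro t
        have hherm : (hdia + (t : ℂ) • Δh).IsHermitian := by
          refine hdiaHerm.add ?_
          unfold Matrix.IsHermitian
          rw [Matrix.conjTranspose_smul, hΔh.eq, Complex.star_def, Complex.conj_ofReal]
        have h1 := hall _ hherm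
        rw [aux_trace_expand K Kd hdia Δh hΔh ρdia hρ.1 t] at h1
        linarith
      have hQ1 : (0:ℝ) < Q + 1 := by linarith
      have h2 := ht (-L / (Q + 1))
      have h3 : (2 * (-L / (Q + 1)) * L + (-L / (Q + 1)) ^ 2 * Q) * (Q + 1) ^ 2
          = -(L ^ 2 * (Q + 2)) := by
        field_simp
        ring
      have h4 : 0 ≤ -(L ^ 2 * (Q + 2)) := by
        rw [← h3]
        exact mul_nonneg h2 (by positivity)
      have h5 : L ^ 2 = 0 := by nlinarith [sq_nonneg L]
      exact (pow_eq_zero_iff two_ne_zero).mp h5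
    · intro hgrad h hherm
      set Δh := h - hdia with hΔdef
      have hΔh : Δh.IsHermitian := hherm.sub hdiaHerm
      have hsub : hdia + ((1 : ℝ) : ℂ) • Δh = h := by
        rw [hΔdef]
        push_cast
        simp
      have h1 := aux_trace_expand K Kd hdia Δh hΔh ρdia hρ.1 1
      rw [hsub] at h1
      have hQ0 : 0 ≤ ((ρdia * ∑ i, (Complex.I • ∑ j, Δh i j • K j)ᴴ *
          (Complex.I • ∑ j, Δh i j • K j)).trace).re := by
        refine aux_trace_mul_re_nonneg hρ ?_
        exact Finset.sum_induction _ _ (fun a b ha hb => ha.add hb) Matrix.PosSemidef.zero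
          (fun i _ => Matrix.posSemidef_conjTranspose_mul_self _)
      rw [h1, hgrad Δh hΔh]
      linarith
  rw [hA] at part1 part2 ⊢
  exact and_congr part1 part2
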